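/- Fix $d \geq 1$, let $\omega = e^{2\pi i/d}$, let $\{e_k\}_{k=0}^{d-1}$ be the standard basis of $\mathbb{C}^d$ and $f_\ell = \tfrac{1}{\sqrt{d}} \sum_{k=0}^{d-1} \omega^{k\ell} e_k$ the Fourier basis. Let Bob's characterized measurements be the projectors $M_{k|0} = e_k e_k^{\dagger}$ and $M_{\ell|1} = f_\ell f_\ell^{\dagger}$. Consider any local-hidden-state model: a finite set $\Lambda$, a probability distribution $q$ on $\Lambda$, density matrices $\rho_\lambda$ on $\mathbb{C}^d$ (positive semidefinite, trace one), and response functions $p(a|x,\lambda) \geq 0$ with $\sum_{a=0}^{d-1} p(a|x,\lambda) = 1$ for each $x \in \{0,1\}$ and $\lambda$. Then the steering functional $\beta_d := \sum_{x \in \{0,1\}} \sum_{a=0}^{d-1} \sum_{\lambda \in \Lambda} q(\lambda)\, p(a|x,\lambda)\, \mathrm{Tr}[M_{a|x}\, \rho_\lambda]$ satisfies $\beta_d \leq \beta_{lhs} := 1 + \tfrac{1}{\sqrt{d}}$. -/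

import Mathlib

open Matrix
open scoped ComplexOrder

section Helpers

variable {n : Type*} [Fintype n]

private lemma star_dot_conj (x y : n → ℂ) :
    star x ⬝ᵥ y = (starRingEnd ℂ) (star y ⬝ᵥ x) := by
  simp [dotProduct, map_sum, mul_comm]

private lemma dot_self_re_nonneg (x : n → ℂ) : 0 ≤ (star x ⬝ᵥ x).re := by
  simp only [dotProduct, Complex.re_sum]
  apply Finset.sum_nonneg
  intro i _
  simpa [Complex.normSq_apply] using Complex.normSq_nonneg (x i)

private lemma key_real_ineq (u v w : n → ℂ)
    (hu : star u ⬝ᵥ u = 1) (hv : star v ⬝ᵥ v = 1) (c : ℝ) (hc0 : 0 ≤ c)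
    (hc : ‖star u ⬝ᵥ v‖ ≤ c) :
    Complex.normSq (star u ⬝ᵥ w) + Complex.normSq (star v ⬝ᵥ w) ≤
      (1 + c) * (star w ⬝ᵥ w).re := by
  set α := star u ⬝ᵥ w with hα
  set β := star v ⬝ᵥ w with hβ
  set g := star u ⬝ᵥ v with hg
  set S : ℝ := Complex.normSq α + Complex.normSq β with hS
  set z : n → ℂ := α • u + β • v with hz
  have hS0 : 0 ≤ S := add_nonneg (Complex.normSq_nonneg _) (Complex.normSq_nonneg _)
  have hN0 : 0 ≤ (star w ⬝ᵥ w).re := dot_self_re_nonneg w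
  have hzw : star z ⬝ᵥ w = (S : ℂ) := by
    simp only [hz, star_add, star_smul, add_dotProduct, smul_dotProduct,
      smul_eq_mul, ← hα, ← hβ, hS]
    push_cast
    simp only [Complex.star_def]
    rw [Complex.conj_mul', Complex.conj_mul']
    norm_cast
    rw [Complex.sq_norm, Complex.sq_norm]
  have hvu : star v ⬝ᵥ u = (starRingEnd ℂ) g := by rw [hg, ← star_dot_conj]
  have hzz : (star z ⬝ᵥ z).re = S + 2 * ((starRingEnd ℂ) α * β * g).re := by
    simp only [hz, star_add, star_smul, add_dotProduct, smul_dotProduct,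
      dotProduct_add, dotProduct_smul, smul_eq_mul,
      ← hα, ← hβ, ← hg, hvu, hu, hv]
    set t := (starRingEnd ℂ) α * β * g with ht
    have heq : α * (star α * 1 + star β * (starRingEnd ℂ) g) + β * (star α * g + star β * 1)
        = ((Complex.normSq α : ℂ) + (Complex.normSq β : ℂ)) + (t + (starRingEnd ℂ) t) := by
      simp only [ht, Complex.star_def, mul_one, ← Complex.mul_conj, _root_.map_mul,
        Complex.conj_conj]
      ring
    rw [heq]
    simp only [Complex.add_re, Complex.ofReal_re, Complex.conj_re, hS]
    ring
  have hzz_le : (star z ⬝ᵥ z).re ≤ S * (1 + c) := by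
    have habs : ((starRingEnd ℂ) α * β * g).re ≤ ‖α‖ * ‖β‖ * c := by
      calc ((starRingEnd ℂ) α * β * g).re ≤ ‖(starRingEnd ℂ) α * β * g‖ :=
            Complex.re_le_norm _
        _ = ‖α‖ * ‖β‖ * ‖g‖ := by
            simp only [norm_mul, Complex.norm_conj]
        _ ≤ ‖α‖ * ‖β‖ * c := by
            apply mul_le_mul_of_nonneg_left hc (by positivity)
    have hamgm : 2 * (‖α‖ * ‖β‖) ≤
        Complex.normSq α + Complex.normSq β := by
      have := sq_nonneg (‖α‖ - ‖β‖)
      rw [← Complex.sq_norm, ← Complex.sq_norm]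
      nlinarith
    rw [hzz]
    nlinarith [norm_nonneg α, norm_nonneg β]
  have hcs : S * S ≤ (star z ⬝ᵥ z).re * (star w ⬝ᵥ w).re := by
    have h1 := norm_inner_le_norm (𝕜 := ℂ)
      ((WithLp.equiv 2 (n → ℂ)).symm z) ((WithLp.equiv 2 (n → ℂ)).symm w)
    rw [show inner ℂ ((WithLp.equiv 2 (n → ℂ)).symm z) ((WithLp.equiv 2 (n → ℂ)).symm w) = star z ⬝ᵥ w
      from dotProduct_comm _ _, hzw] at h1
    have h2 : ‖(S:ℂ)‖ = S := by
      rw [Complex.norm_real, Real.norm_of_nonneg hS0]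
    rw [h2] at h1
    have hz2 : ‖(WithLp.equiv 2 (n → ℂ)).symm z‖ * ‖(WithLp.equiv 2 (n → ℂ)).symm z‖
        = (star z ⬝ᵥ z).re := by
      rw [← inner_self_eq_norm_mul_norm (𝕜 := ℂ), show inner ℂ ((WithLp.equiv 2 (n → ℂ)).symm z)
        ((WithLp.equiv 2 (n → ℂ)).symm z) = star z ⬝ᵥ z from dotProduct_comm _ _]
      rfl
    have hw2 : ‖(WithLp.equiv 2 (n → ℂ)).symm w‖ * ‖(WithLp.equiv 2 (n → ℂ)).symm w‖
        = (star w ⬝ᵥ w).re := by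
      rw [← inner_self_eq_norm_mul_norm (𝕜 := ℂ), show inner ℂ ((WithLp.equiv 2 (n → ℂ)).symm w)
        ((WithLp.equiv 2 (n → ℂ)).symm w) = star w ⬝ᵥ w from dotProduct_comm _ _]
      rfl
    calc S * S ≤ (‖(WithLp.equiv 2 (n → ℂ)).symm z‖ * ‖(WithLp.equiv 2 (n → ℂ)).symm w‖) *
        (‖(WithLp.equiv 2 (n → ℂ)).symm z‖ * ‖(WithLp.equiv 2 (n → ℂ)).symm w‖) := by
          apply mul_self_le_mul_self hS0 h1
      _ = _ := by rw [← hz2, ← hw2]; ring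
  rcases eq_or_lt_of_le hS0 with h0 | hpos
  · show S ≤ (1 + c) * (star w ⬝ᵥ w).re
    rw [← h0]; positivity
  · have : S * S ≤ S * ((1 + c) * (star w ⬝ᵥ w).re) := by
      calc S * S ≤ (star z ⬝ᵥ z).re * (star w ⬝ᵥ w).re := hcs
        _ ≤ (S * (1 + c)) * (star w ⬝ᵥ w).re := by
            apply mul_le_mul_of_nonneg_right hzz_le hN0
        _ = S * ((1 + c) * (star w ⬝ᵥ w).re) := by ring
    exact le_of_mul_le_mul_left this hpos

variable [DecidableEq n]

private lemma trace_nonneg_of_psd {A : Matrix n n ℂ} (hA : A.PosSemidef) : 0 ≤ A.trace := by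
  rw [Matrix.trace]
  apply Finset.sum_nonneg
  intro i _
  have h := hA.dotProduct_mulVec_nonneg (Pi.single i 1)
  simpa [Matrix.mulVec_single, dotProduct, Pi.single_apply, Matrix.diag,
    apply_ite, Finset.sum_ite_eq'] using h

private lemma trace_mul_nonneg {A B : Matrix n n ℂ} (hA : A.PosSemidef) (hB : B.PosSemidef) :
    0 ≤ (A * B).trace := by
  obtain ⟨C, rfl⟩ : ∃ C : Matrix n n ℂ, B = Cᴴ * C := by
    open scoped MatrixOrder Matrix.Norms.L2Operator in
    exact CStarAlgebra.nonneg_iff_eq_star_mul_self.mp hB.nonneg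
  rw [← Matrix.mul_assoc, Matrix.trace_mul_cycle]
  exact trace_nonneg_of_psd (hA.mul_mul_conjTranspose_same C)

private lemma vecMulVec_mulVec' (u x : n → ℂ) :
    vecMulVec u (star u) *ᵥ x = (star u ⬝ᵥ x) • u := by
  ext i
  simp only [Matrix.mulVec, dotProduct, Matrix.vecMulVec_apply, Pi.smul_apply,
    smul_eq_mul, Finset.sum_mul]
  apply Finset.sum_congr rfl
  intro j _; ring

private lemma hermitian_vecMulVec (u : n → ℂ) :
    (vecMulVec u (star u)).IsHermitian := by
  ext i j
  simp [Matrix.conjTranspose_apply, Matrix.vecMulVec_apply, mul_comm]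

private lemma dot_vecMulVec_form (u x : n → ℂ) :
    star x ⬝ᵥ (vecMulVec u (star u) *ᵥ x) = (Complex.normSq (star u ⬝ᵥ x) : ℂ) := by
  rw [vecMulVec_mulVec', dotProduct_smul, star_dot_conj x u, smul_eq_mul,
    Complex.mul_conj]

private lemma key_psd (u v : n → ℂ) (c : ℝ)
    (hu : star u ⬝ᵥ u = 1) (hv : star v ⬝ᵥ v = 1) (hc0 : 0 ≤ c)
    (hc : ‖star u ⬝ᵥ v‖ ≤ c) :
    (((1 + c : ℝ) : ℂ) • (1 : Matrix n n ℂ) - vecMulVec u (star u)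
      - vecMulVec v (star v)).PosSemidef := by
  apply Matrix.PosSemidef.of_dotProduct_mulVec_nonneg
  · apply Matrix.IsHermitian.sub
    apply Matrix.IsHermitian.sub
    · show _ = _
      rw [Matrix.conjTranspose_smul, Matrix.conjTranspose_one, Complex.star_def,
        Complex.conj_ofReal]
    · exact hermitian_vecMulVec u
    · exact hermitian_vecMulVec v
  · intro x
    have hxx : star x ⬝ᵥ x = (((star x ⬝ᵥ x).re : ℝ) : ℂ) := by
      apply Complex.ext
      · simp
      · simp only [Complex.ofReal_im]
        simp only [dotProduct, Complex.im_sum]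
        apply Finset.sum_eq_zero
        intro i _
        simp [Complex.mul_im, Pi.star_apply, Complex.star_def]
        ring
    rw [Matrix.sub_mulVec, Matrix.sub_mulVec, Matrix.smul_mulVec, Matrix.one_mulVec,
      dotProduct_sub, dotProduct_sub, dotProduct_smul,
      dot_vecMulVec_form, dot_vecMulVec_form, smul_eq_mul, hxx]
    have hcast : (((1 + c : ℝ)) : ℂ) * (((star x ⬝ᵥ x).re : ℝ) : ℂ)
        - (Complex.normSq (star u ⬝ᵥ x) : ℂ) - (Complex.normSq (star v ⬝ᵥ x) : ℂ)
        = (((1 + c) * (star x ⬝ᵥ x).re - Complex.normSq (star u ⬝ᵥ x)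
            - Complex.normSq (star v ⬝ᵥ x) : ℝ) : ℂ) := by push_cast; ring
    rw [hcast, Complex.zero_le_real]
    linarith [key_real_ineq u v x hu hv c hc0 hc]

private lemma two_proj_trace_bound (u v : n → ℂ) (c : ℝ)
    (hu : star u ⬝ᵥ u = 1) (hv : star v ⬝ᵥ v = 1) (hc0 : 0 ≤ c)
    (hc : ‖star u ⬝ᵥ v‖ ≤ c)
    {ρ : Matrix n n ℂ} (hρ : ρ.PosSemidef) (hρtr : ρ.trace = 1) :
    ((vecMulVec u (star u) * ρ).trace).re + ((vecMulVec v (star v) * ρ).trace).re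
      ≤ 1 + c := by
  have hA := key_psd u v c hu hv hc0 hc
  have h := trace_mul_nonneg hA hρ
  have hexp : ((((1 + c : ℝ) : ℂ) • (1 : Matrix n n ℂ) - vecMulVec u (star u)
      - vecMulVec v (star v)) * ρ).trace
      = ((1 + c : ℝ) : ℂ) - (vecMulVec u (star u) * ρ).trace
        - (vecMulVec v (star v) * ρ).trace := by
    rw [Matrix.sub_mul, Matrix.sub_mul, Matrix.smul_mul, Matrix.one_mul,
      Matrix.trace_sub, Matrix.trace_sub, Matrix.trace_smul, hρtr, smul_eq_mul, mul_one]
  rw [hexp] at h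
  have hre := (Complex.nonneg_iff.mp h).1
  simp only [Complex.sub_re, Complex.ofReal_re] at hre
  linarith

end Helpers


theorem steering_lhs_bound (d : ℕ) (hd : 1 ≤ d)
    (Λ : Type) [Fintype Λ]
    (q : Λ → ℝ) (hq : ∀ l, 0 ≤ q l) (hqsum : ∑ l, q l = 1)
    (ρ : Λ → Matrix (Fin d) (Fin d) ℂ)
    (hρpos : ∀ l, (ρ l).PosSemidef) (hρtr : ∀ l, (ρ l).trace = 1)
    (pr : Fin d → Fin 2 → Λ → ℝ)
    (hpr : ∀ a x l, 0 ≤ pr a x l) (hprsum : ∀ x l, ∑ a, pr a x l = 1) :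
    let ω : ℂ := Complex.exp (2 * (Real.pi : ℂ) * Complex.I / d)
    let e : Fin d → Fin d → ℂ := fun k => Pi.single k 1
    let f : Fin d → Fin d → ℂ := fun ℓ k => ω ^ (k.val * ℓ.val) / (Real.sqrt d : ℂ)
    let M : Fin 2 → Fin d → Matrix (Fin d) (Fin d) ℂ :=
      ![fun k => vecMulVec (e k) (star (e k)), fun ℓ => vecMulVec (f ℓ) (star (f ℓ))]
    (∑ x : Fin 2, ∑ a : Fin d, ∑ l : Λ,
        q l * pr a x l * ((M x a * ρ l).trace).re) ≤ 1 + 1 / Real.sqrt d := by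
  intro ω e f M
  have hd0 : (0:ℝ) < d := by exact_mod_cast hd
  set s : ℝ := Real.sqrt d with hsdef
  have hs : 0 < s := Real.sqrt_pos.mpr hd0
  have hs2 : s * s = d := Real.mul_self_sqrt hd0.le
  have hc0 : (0:ℝ) ≤ 1 / s := by positivity
  -- |ω| = 1
  have habsω : ‖ω‖ = 1 := by
    have harg : (2 * (Real.pi : ℂ) * Complex.I / d) = ((2 * Real.pi / d : ℝ) : ℂ) * Complex.I := by
      push_cast; ring
    show ‖Complex.exp _‖ = 1
    rw [harg, Complex.norm_exp_ofReal_mul_I]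
  -- star of e
  have hstare : ∀ a : Fin d, star (e a) = e a := by
    intro a; ext k
    simp only [e, Pi.star_apply, Pi.single_apply]
    split <;> simp
  -- e is unit
  have he_unit : ∀ a : Fin d, star (e a) ⬝ᵥ e a = 1 := by
    intro a
    rw [hstare]
    show Pi.single a (1:ℂ) ⬝ᵥ Pi.single a 1 = 1
    rw [single_dotProduct]
    simp
  -- |f b k| = 1/s
  have habsf : ∀ (b k : Fin d), ‖f b k‖ = 1 / s := by
    intro b k
    show ‖ω ^ (k.val * b.val) / (s : ℂ)‖ = 1 / s
    rw [norm_div, norm_pow, habsω, one_pow, Complex.norm_real, Real.norm_of_nonneg hs.le]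
  -- f is unit
  have hf_unit : ∀ b : Fin d, star (f b) ⬝ᵥ f b = 1 := by
    intro b
    have : ∀ k : Fin d, star (f b k) * f b k = ((1 / (d:ℝ) : ℝ) : ℂ) := by
      intro k
      rw [Complex.star_def, Complex.conj_mul']
      rw [habsf]
      push_cast
      rw [div_pow, one_pow]
      congr 1
      norm_cast
      rw [← hs2]; ring
    show ∑ k, star (f b k) * f b k = 1
    rw [Finset.sum_congr rfl fun k _ => this k, Finset.sum_const, Finset.card_univ,
      Fintype.card_fin, nsmul_eq_mul]
    push_cast
    field_simp
  -- overlap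
  have hef : ∀ (a b : Fin d), ‖star (e a) ⬝ᵥ f b‖ ≤ 1 / s := by
    intro a b
    rw [hstare]
    have : (e a) ⬝ᵥ f b = f b a := by
      show Pi.single a (1:ℂ) ⬝ᵥ f b = f b a
      rw [single_dotProduct, one_mul]
    rw [this, habsf]
  -- the per-λ, per-outcome-pair bound
  have hkey : ∀ (l : Λ) (a b : Fin d),
      ((M 0 a * ρ l).trace).re + ((M 1 b * ρ l).trace).re ≤ 1 + 1 / s := by
    intro l a b
    have hM0 : M 0 a = vecMulVec (e a) (star (e a)) := rfl
    have hM1 : M 1 b = vecMulVec (f b) (star (f b)) := rfl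
    rw [hM0, hM1]
    exact two_proj_trace_bound (e a) (f b) (1/s) (he_unit a) (hf_unit b) hc0 (hef a b)
      (hρpos l) (hρtr l)
  -- nonnegativity of probabilities products
  -- sum manipulation
  rw [Fin.sum_univ_two]
  have hswap : ∀ x : Fin 2, (∑ a : Fin d, ∑ l : Λ, q l * pr a x l * ((M x a * ρ l).trace).re)
      = ∑ l : Λ, q l * ∑ a : Fin d, pr a x l * ((M x a * ρ l).trace).re := by
    intro x
    rw [Finset.sum_comm]
    apply Finset.sum_congr rfl
    intro l _
    rw [Finset.mul_sum]
    apply Finset.sum_congr rfl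
    intro a _
    ring
  rw [hswap 0, hswap 1, ← Finset.sum_add_distrib]
  have hperl : ∀ l : Λ,
      q l * ∑ a : Fin d, pr a 0 l * ((M 0 a * ρ l).trace).re
        + q l * ∑ a : Fin d, pr a 1 l * ((M 1 a * ρ l).trace).re
      ≤ q l * (1 + 1 / s) := by
    intro l
    rw [← mul_add]
    apply mul_le_mul_of_nonneg_left _ (hq l)
    -- double-sum trick
    have h0 : (∑ a : Fin d, pr a 0 l * ((M 0 a * ρ l).trace).re)
        = ∑ a : Fin d, ∑ b : Fin d, pr a 0 l * pr b 1 l * ((M 0 a * ρ l).trace).re := by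
      apply Finset.sum_congr rfl
      intro a _
      rw [← Finset.sum_mul]
      rw [show (∑ b : Fin d, pr a 0 l * pr b 1 l) = pr a 0 l * ∑ b : Fin d, pr b 1 l by
        rw [Finset.mul_sum]]
      rw [hprsum 1 l, mul_one]
    have h1 : (∑ b : Fin d, pr b 1 l * ((M 1 b * ρ l).trace).re)
        = ∑ a : Fin d, ∑ b : Fin d, pr a 0 l * pr b 1 l * ((M 1 b * ρ l).trace).re := by
      rw [Finset.sum_comm]
      apply Finset.sum_congr rfl
      intro b _
      rw [← Finset.sum_mul]
      rw [show (∑ a : Fin d, pr a 0 l * pr b 1 l) = (∑ a : Fin d, pr a 0 l) * pr b 1 l by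
        rw [Finset.sum_mul]]
      rw [hprsum 0 l, one_mul]
    rw [h0, h1, ← Finset.sum_add_distrib]
    have : (∑ a : Fin d, (∑ b : Fin d, pr a 0 l * pr b 1 l * ((M 0 a * ρ l).trace).re
        + ∑ b : Fin d, pr a 0 l * pr b 1 l * ((M 1 b * ρ l).trace).re))
        ≤ ∑ a : Fin d, ∑ b : Fin d, pr a 0 l * pr b 1 l * (1 + 1 / s) := by
      apply Finset.sum_le_sum
      intro a _
      rw [← Finset.sum_add_distrib]
      apply Finset.sum_le_sum
      intro b _
      rw [← mul_add]
      apply mul_le_mul_of_nonneg_left (hkey l a b)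
      exact mul_nonneg (hpr a 0 l) (hpr b 1 l)
    refine this.trans ?_
    have : (∑ a : Fin d, ∑ b : Fin d, pr a 0 l * pr b 1 l * (1 + 1 / s))
        = (1 + 1 / s) := by
      have : ∀ a : Fin d, (∑ b : Fin d, pr a 0 l * pr b 1 l * (1 + 1 / s))
          = pr a 0 l * (1 + 1 / s) := by
        intro a
        rw [show (∑ b : Fin d, pr a 0 l * pr b 1 l * (1 + 1/s))
            = (pr a 0 l * (1 + 1/s)) * ∑ b : Fin d, pr b 1 l by
          rw [Finset.mul_sum]; apply Finset.sum_congr rfl; intro b _; ring]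
        rw [hprsum 1 l, mul_one]
      rw [Finset.sum_congr rfl fun a _ => this a, ← Finset.sum_mul, hprsum 0 l, one_mul]
    rw [this]
  calc (∑ l : Λ, (q l * ∑ a : Fin d, pr a 0 l * ((M 0 a * ρ l).trace).re
        + q l * ∑ a : Fin d, pr a 1 l * ((M 1 a * ρ l).trace).re))
      ≤ ∑ l : Λ, q l * (1 + 1 / s) := Finset.sum_le_sum fun l _ => hperl l
    _ = 1 + 1 / s := by rw [← Finset.sum_mul, hqsum, one_mul]
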